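/- For every integer j ≥ 1 and every real δ with 0 ≤ δ ≤ 1, the point (0, −1, 0) belongs both to K + (0, 0, −δ) and to K + (−w₋(j)); equivalently, (0, −1, δ) ∈ K and (0, −1, 0) + w₋(j) ∈ K. -/

import Mathlib

open Pointwise

/-- `w₋(j) = (0, −∑_{t=1}^{j} 1/t², ∑_{t=1}^{j} 1/t³)`. -/
noncomputable def wM (j : ℕ) : Fin 3 → ℝ :=
  ![0, -(∑ t ∈ Finset.Icc 1 j, (1 : ℝ) / (t : ℝ) ^ 2),
    ∑ t ∈ Finset.Icc 1 j, (1 : ℝ) / (t : ℝ) ^ 3]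

/-- `w₊(k) = (∑_{t=1}^{k} 1/t², ∑_{t=1}^{k} 1/t³, 0)`. -/
noncomputable def wP (k : ℕ) : Fin 3 → ℝ :=
  ![∑ t ∈ Finset.Icc 1 k, (1 : ℝ) / (t : ℝ) ^ 2,
    ∑ t ∈ Finset.Icc 1 k, (1 : ℝ) / (t : ℝ) ^ 3, 0]

/-- `ζ₂ = ∑_{t=1}^{∞} 1/t²`. -/
noncomputable def zeta2 : ℝ := ∑' t : ℕ, (1 : ℝ) / ((t : ℝ) + 1) ^ 2

/-- `ζ₃ = ∑_{t=1}^{∞} 1/t³`. -/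
noncomputable def zeta3 : ℝ := ∑' t : ℕ, (1 : ℝ) / ((t : ℝ) + 1) ^ 3

/-- `u₁ = (ζ₂, −2, ζ₃)`. -/
noncomputable def uOne : Fin 3 → ℝ := ![zeta2, -2, zeta3]

/-- `u₀ = (ζ₂, −2, 0)`. -/
noncomputable def uZero : Fin 3 → ℝ := ![zeta2, -2, 0]

/-- `v(j,k) = (1/(j+1)³)·w(j,k) + (((j+1)³ − 1)/(j+1)³)·w(j,k+1)` where
`w(j,k) = w₋(j) + w₊(k)`. -/
noncomputable def vU (j k : ℕ) : Fin 3 → ℝ :=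
  ((1 : ℝ) / ((j : ℝ) + 1) ^ 3) • (wM j + wP k) +
    ((((j : ℝ) + 1) ^ 3 - 1) / ((j : ℝ) + 1) ^ 3) • (wM j + wP (k + 1))

/-- The universal convex body `K`: the closure of the convex hull of the points
`w₋(j)`, `v(j,k)`, `u₀ − w₊(k)` and `u₁ − w₊(k)`. -/
noncomputable def KU : Set (Fin 3 → ℝ) :=
  closure (convexHull ℝ
    (Set.range wM ∪ (⋃ j : ℕ, Set.range (vU j)) ∪
     Set.range (fun k => uZero - wP k) ∪ Set.range (fun k => uOne - wP k)))

open Filter Topology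

private lemma sumIcc_eq_range (p k : ℕ) :
    ∑ t ∈ Finset.Icc 1 k, (1:ℝ)/(t:ℝ)^p = ∑ t ∈ Finset.range k, (1:ℝ)/((t:ℝ)+1)^p := by
  rw [← Finset.Ico_add_one_right_eq_Icc, Finset.sum_Ico_eq_sum_range]
  simp only [Nat.add_sub_cancel]
  refine Finset.sum_congr rfl fun t _ => ?_
  push_cast; ring

private lemma hsum2 : Summable (fun t : ℕ => (1:ℝ)/((t:ℝ)+1)^2) := by
  have := Real.summable_one_div_nat_pow.mpr (le_refl 2)
  have h := (summable_nat_add_iff 1).mpr this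
  simpa using h

private lemma hsum3 : Summable (fun t : ℕ => (1:ℝ)/((t:ℝ)+1)^3) := by
  have := Real.summable_one_div_nat_pow.mpr (by norm_num : 2 ≤ 3)
  have h := (summable_nat_add_iff 1).mpr this
  simpa using h

private lemma tendS2 :
    Tendsto (fun k : ℕ => ∑ t ∈ Finset.Icc 1 k, (1:ℝ)/(t:ℝ)^2) atTop (𝓝 zeta2) := by
  rw [zeta2]
  exact hsum2.hasSum.tendsto_sum_nat.congr fun k => (sumIcc_eq_range 2 k).symm

private lemma tendS3 :
    Tendsto (fun k : ℕ => ∑ t ∈ Finset.Icc 1 k, (1:ℝ)/(t:ℝ)^3) atTop (𝓝 zeta3) := by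
  rw [zeta3]
  exact hsum3.hasSum.tendsto_sum_nat.congr fun k => (sumIcc_eq_range 3 k).symm

private lemma one_le_zeta3 : 1 ≤ zeta3 := by
  rw [zeta3]
  refine le_of_eq_of_le ?_ (Summable.le_tsum hsum3 0 fun i _ => by positivity)
  norm_num

private lemma S3_nonneg (j : ℕ) : 0 ≤ ∑ t ∈ Finset.Icc 1 j, (1:ℝ)/(t:ℝ)^3 :=
  Finset.sum_nonneg fun t _ => by positivity

private lemma S3_le (j : ℕ) : ∑ t ∈ Finset.Icc 1 j, (1:ℝ)/(t:ℝ)^3 ≤ zeta3 := by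
  rw [sumIcc_eq_range, zeta3]
  exact Summable.sum_le_tsum (Finset.range j) (fun i _ => by positivity) hsum3

private lemma range_sum2_le (n : ℕ) :
    ∑ t ∈ Finset.range (n+1), (1:ℝ)/((t:ℝ)+1)^2 ≤ 2 - 1/((n:ℝ)+1) := by
  induction n with
  | zero => norm_num
  | succ n ih =>
    rw [Finset.sum_range_succ]
    have key : (1:ℝ)/(((n:ℕ):ℝ)+1+1)^2 ≤ 1/((n:ℝ)+1) - 1/((n:ℝ)+2) := by
      have e : 1/((n:ℝ)+1) - 1/((n:ℝ)+2) = 1/(((n:ℝ)+1)*((n:ℝ)+2)) := by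
        field_simp; ring
      rw [e]
      have h1 : ((n:ℝ)+1)*((n:ℝ)+2) ≤ ((n:ℝ)+1+1)^2 := by
        nlinarith [Nat.cast_nonneg (α := ℝ) n]
      exact one_div_le_one_div_of_le (by positivity) h1
    push_cast
    rw [show ((n:ℝ)+1+1) = (n:ℝ)+2 by ring]
    rw [show ((n:ℝ)+1+1) = (n:ℝ)+2 by ring] at key
    linarith

private lemma S2_le_two (j : ℕ) : ∑ t ∈ Finset.Icc 1 j, (1:ℝ)/(t:ℝ)^2 ≤ 2 := by
  rw [sumIcc_eq_range]
  cases j with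
  | zero => norm_num
  | succ m =>
    have := range_sum2_le m
    have h2 : (0:ℝ) ≤ 1/((m:ℝ)+1) := by positivity
    linarith

private lemma wM0 : wM 0 = ![0,0,0] := by simp [wM]
private lemma wM1 : wM 1 = ![0,-1,1] := by norm_num [wM]

private lemma KU_convex : Convex ℝ KU := (convex_convexHull ℝ _).closure

private lemma KU_closed : IsClosed KU := isClosed_closure

private lemma wM_mem (j : ℕ) : wM j ∈ KU :=
  subset_closure (subset_convexHull ℝ _ (Or.inl (Or.inl (Or.inl ⟨j, rfl⟩))))

private lemma u0_mem (k : ℕ) : uZero - wP k ∈ KU :=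
  subset_closure (subset_convexHull ℝ _ (Or.inl (Or.inr ⟨k, rfl⟩)))

private lemma u1_mem (k : ℕ) : uOne - wP k ∈ KU :=
  subset_closure (subset_convexHull ℝ _ (Or.inr ⟨k, rfl⟩))

private lemma L0_mem : ![0, -2 - zeta3, 0] ∈ KU := by
  have htend : Filter.Tendsto (fun k : ℕ => uZero - wP k) atTop (𝓝 (![0, -2 - zeta3, 0])) := by
    rw [tendsto_pi_nhds]
    intro i
    fin_cases i
    · have hc : Filter.Tendsto (fun _ : ℕ => zeta2) atTop (𝓝 zeta2) := tendsto_const_nhds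
      have h := hc.sub tendS2
      rw [sub_self] at h
      simpa [uZero, wP] using h
    · have hc : Filter.Tendsto (fun _ : ℕ => (-2:ℝ)) atTop (𝓝 (-2:ℝ)) := tendsto_const_nhds
      have h := hc.sub tendS3
      simpa [uZero, wP] using h
    · have hc : Filter.Tendsto (fun _ : ℕ => (0:ℝ)) atTop (𝓝 (0:ℝ)) := tendsto_const_nhds
      simpa [uZero, wP] using hc
  exact KU_closed.mem_of_tendsto htend (Filter.Eventually.of_forall u0_mem)

private lemma L1_mem : ![0, -2 - zeta3, zeta3] ∈ KU := by
  have htend : Filter.Tendsto (fun k : ℕ => uOne - wP k) atTop (𝓝 (![0, -2 - zeta3, zeta3])) := by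
    rw [tendsto_pi_nhds]
    intro i
    fin_cases i
    · have hc : Filter.Tendsto (fun _ : ℕ => zeta2) atTop (𝓝 zeta2) := tendsto_const_nhds
      have h := hc.sub tendS2
      rw [sub_self] at h
      simpa [uOne, wP] using h
    · have hc : Filter.Tendsto (fun _ : ℕ => (-2:ℝ)) atTop (𝓝 (-2:ℝ)) := tendsto_const_nhds
      have h := hc.sub tendS3
      simpa [uOne, wP] using h
    · have hc : Filter.Tendsto (fun _ : ℕ => zeta3) atTop (𝓝 zeta3) := tendsto_const_nhds
      have h := hc.sub tendS3
      rw [sub_self] at h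
      simpa [uOne, wP] using h
  exact KU_closed.mem_of_tendsto htend (Filter.Eventually.of_forall u1_mem)

/-- **Witness point for `⋂ A_i ∩ ⋂ B_j`.** For every `j ≥ 1` and `0 ≤ δ ≤ 1`, the
point `(0, −1, 0)` lies both in `K + (0,0,−δ)` and in `K + (−w₋(j))`;
equivalently, `(0, −1, δ) ∈ K` and `(0, −1, 0) + w₋(j) ∈ K`. -/
theorem witness_A_B (j : ℕ) (hj : 1 ≤ j) (δ : ℝ) (h0 : 0 ≤ δ) (h1 : δ ≤ 1) :
    (![(0 : ℝ), -1, 0] ∈ ![(0 : ℝ), 0, -δ] +ᵥ KU ∧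
      ![(0 : ℝ), -1, 0] ∈ (-(wM j)) +ᵥ KU) ∧
    (![(0 : ℝ), -1, δ] ∈ KU ∧ ![(0 : ℝ), -1, 0] + wM j ∈ KU) := by
  have hz3 : (1:ℝ) ≤ zeta3 := one_le_zeta3
  have hz3pos : (0:ℝ) < zeta3 := by linarith
  have hz2pos : (0:ℝ) < 2 + zeta3 := by linarith
  have h1' : ![(0:ℝ), -1, δ] ∈ KU := by
    have hR : ((1+zeta3)/(2+zeta3)) • wM 0 + (1/(2+zeta3)) • ![0, -2 - zeta3, 0] ∈ KU :=
      KU_convex (wM_mem 0) L0_mem (a := (1+zeta3)/(2+zeta3)) (b := 1/(2+zeta3))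
        (by positivity) (by positivity) (by field_simp; ring)
    have hfin := KU_convex (wM_mem 1) hR (a := δ) (b := 1-δ) h0 (by linarith) (by ring)
    have heq : ![(0:ℝ), -1, δ] =
        δ • wM 1 + (1-δ) •
          (((1+zeta3)/(2+zeta3)) • wM 0 + (1/(2+zeta3)) • ![0, -2 - zeta3, 0]) := by
      funext i
      fin_cases i
      · simp [wM0, wM1]
      · simp only [wM0, wM1, Pi.add_apply, Pi.smul_apply, Matrix.cons_val_zero,
          Matrix.cons_val_one, Matrix.head_cons, smul_eq_mul, Fin.mk_one]
        field_simp
        ring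
      · simp [wM0, wM1]
    rw [heq]
    exact hfin
  have h2' : ![(0:ℝ), -1, 0] + wM j ∈ KU := by
    set a := ∑ t ∈ Finset.Icc 1 j, (1:ℝ)/(t:ℝ)^2 with ha
    set b := ∑ t ∈ Finset.Icc 1 j, (1:ℝ)/(t:ℝ)^3 with hb
    have haa : a ≤ 2 := S2_le_two j
    have hbb : b ≤ zeta3 := S3_le j
    have hb0 : 0 ≤ b := S3_nonneg j
    have hdpos : (0:ℝ) < 2 + zeta3 - a := by linarith
    set t := 1/(2 + zeta3 - a) with ht
    have ht0 : 0 ≤ t := by positivity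
    have ht1 : t ≤ 1 := by
      rw [ht, div_le_one hdpos]; linarith
    have hQ : (1 - b/zeta3) • ![0, -2 - zeta3, 0] + (b/zeta3) • ![0, -2 - zeta3, zeta3] ∈ KU := by
      refine KU_convex L0_mem L1_mem (a := 1 - b/zeta3) (b := b/zeta3) ?_ (by positivity) (by ring)
      have : b/zeta3 ≤ 1 := (div_le_one hz3pos).mpr hbb
      linarith
    have hfin := KU_convex (wM_mem j) hQ (a := 1-t) (b := t) (by linarith) ht0 (by ring)
    have heq : ![(0:ℝ), -1, 0] + wM j =
        (1-t) • wM j + t • ((1 - b/zeta3) • ![0, -2 - zeta3, 0] +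
          (b/zeta3) • ![0, -2 - zeta3, zeta3]) := by
      funext i
      fin_cases i
      · simp [wM]
      · simp only [wM, Pi.add_apply, Pi.smul_apply, Matrix.cons_val_zero,
          Matrix.cons_val_one, Matrix.head_cons, smul_eq_mul, Fin.mk_one, ← ha, ← hb]
        rw [ht]
        field_simp
        ring
      · simp only [wM, Pi.add_apply, Pi.smul_apply, Matrix.cons_val_zero,
          Matrix.cons_val_one, Matrix.head_cons, smul_eq_mul, ← ha, ← hb,
          Matrix.cons_val_two, Matrix.tail_cons, Fin.reduceFinMk, Matrix.cons_val]
        field_simp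
        ring
    rw [heq]
    exact hfin
  refine ⟨⟨?_, ?_⟩, h1', h2'⟩
  · rw [Set.mem_vadd_set]
    refine ⟨![(0:ℝ), -1, δ], h1', ?_⟩
    funext i
    fin_cases i <;> simp [vadd_eq_add]
  · rw [Set.mem_vadd_set]
    refine ⟨![(0:ℝ), -1, 0] + wM j, h2', ?_⟩
    show -(wM j) + (![(0:ℝ), -1, 0] + wM j) = ![(0:ℝ), -1, 0]
    abel
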